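/- Let (X̄, d) be an ultra-metric space with a distinguished point 0, and let B(X) be the free Boolean group on X = X̄ \ {0}, identified with finite subsets of X under symmetric difference. For u ∈ B(X), define ‖u‖ as the infimum over all finite families of pairs {(x₁,x₂),…,(x_{2n−1},x_{2n})} in X̄ with u = Σ (x_{2i−1} + x_{2i}) (computed in B(X) with 0 mapped to the zero element) of max_i d(x_{2i−1}, x_{2i}). Then ‖·‖ is an ultra-norm on B(X): ‖0‖=0, ‖u‖>0 for u ≠ 0, and ‖u+v‖ ≤ max{‖u‖,‖v‖}. -/

import Mathlib

set_option linter.unusedSectionVars false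


/-- The canonical map from `X̄` to the free Boolean group `B(X)` over `X = X̄ \ {z}`,
sending the distinguished point `z` to the zero element. -/
noncomputable def boolEmb {Xb : Type*} [DecidableEq Xb] (z : Xb) (x : Xb) :
    ({ y : Xb // y ≠ z } →₀ ZMod 2) :=
  if h : x = z then 0 else Finsupp.single ⟨x, h⟩ (1 : ZMod 2)

/-- The `d`-length of a configuration: the maximum of the distances of its pairs. -/
noncomputable def confLength {Xb : Type*} [MetricSpace Xb] (L : List (Xb × Xb)) : ℝ :=
  (L.map fun p => dist p.1 p.2).foldr max 0

/-- The Graev-type ultra-norm: the infimum of the `d`-lengths of the configurations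
representing `u`. -/
noncomputable def graevNorm {Xb : Type*} [MetricSpace Xb] [DecidableEq Xb] (z : Xb)
    (u : { y : Xb // y ≠ z } →₀ ZMod 2) : ℝ :=
  sInf {r : ℝ | ∃ L : List (Xb × Xb),
    (L.map fun p => boolEmb z p.1 + boolEmb z p.2).sum = u ∧ r = confLength L}

section Aux
variable {Xb : Type*} [MetricSpace Xb] [DecidableEq Xb]

lemma confLength_nil : confLength ([] : List (Xb × Xb)) = 0 := rfl

lemma confLength_cons (p : Xb × Xb) (L : List (Xb × Xb)) :
    confLength (p :: L) = max (dist p.1 p.2) (confLength L) := rfl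

lemma confLength_nonneg (L : List (Xb × Xb)) : 0 ≤ confLength L := by
  induction L with
  | nil => simp [confLength_nil]
  | cons p L ih => rw [confLength_cons]; exact le_max_of_le_right ih

lemma dist_le_confLength {L : List (Xb × Xb)} {p : Xb × Xb} (hp : p ∈ L) :
    dist p.1 p.2 ≤ confLength L := by
  induction L with
  | nil => simp at hp
  | cons q L ih =>
    rw [confLength_cons]
    rcases List.mem_cons.1 hp with h | h
    · subst h; exact le_max_left _ _
    · exact le_max_of_le_right (ih h)

lemma confLength_append (L1 L2 : List (Xb × Xb)) :
    confLength (L1 ++ L2) ≤ max (confLength L1) (confLength L2) := by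
  induction L1 with
  | nil => simp [confLength_nil, le_max_of_le_right, confLength_nonneg]
  | cons p L ih =>
    rw [List.cons_append, confLength_cons, confLength_cons]
    apply max_le
    · exact le_max_of_le_left (le_max_left _ _)
    · exact ih.trans (max_le (le_max_of_le_left (le_max_right _ _)) (le_max_right _ _))

def reps (z : Xb) (u : { y : Xb // y ≠ z } →₀ ZMod 2) : Set ℝ :=
  {r : ℝ | ∃ L : List (Xb × Xb),
    (L.map fun p => boolEmb z p.1 + boolEmb z p.2).sum = u ∧ r = confLength L}

lemma graevNorm_eq (z : Xb) (u : { y : Xb // y ≠ z } →₀ ZMod 2) :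
    graevNorm z u = sInf (reps z u) := rfl

lemma reps_bddBelow (z : Xb) (u : { y : Xb // y ≠ z } →₀ ZMod 2) :
    BddBelow (reps z u) :=
  ⟨0, fun _ ⟨L, _, hr⟩ => hr ▸ confLength_nonneg L⟩

lemma zmod2_eq_one : ∀ c : ZMod 2, c ≠ 0 → c = 1 := by decide

lemma exists_conf (z : Xb) (u : { y : Xb // y ≠ z } →₀ ZMod 2) :
    ∃ L : List (Xb × Xb), (L.map fun p => boolEmb z p.1 + boolEmb z p.2).sum = u := by
  induction u using Finsupp.induction with
  | zero => exact ⟨[], rfl⟩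
  | single_add a b f ha hb ih =>
    obtain ⟨L, hL⟩ := ih
    refine ⟨((a : Xb), z) :: L, ?_⟩
    have hb1 : b = 1 := zmod2_eq_one b hb
    have h1 : boolEmb z (a : Xb) = Finsupp.single a b := by
      rw [boolEmb, dif_neg a.2, hb1]
    have h2 : boolEmb z z = 0 := dif_pos rfl
    rw [List.map_cons, List.sum_cons, hL, h1, h2, add_zero]

lemma reps_nonempty (z : Xb) (u : { y : Xb // y ≠ z } →₀ ZMod 2) :
    (reps z u).Nonempty := by
  obtain ⟨L, hL⟩ := exists_conf z u
  exact ⟨confLength L, L, hL, rfl⟩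

noncomputable def phi (z x : Xb) (r : ℝ) : ({ y : Xb // y ≠ z } →₀ ZMod 2) →+ ZMod 2 :=
  Finsupp.liftAddHom fun y => if dist (y : Xb) x < r then AddMonoidHom.id (ZMod 2) else 0

lemma phi_single (z x : Xb) (r : ℝ) (y : { y : Xb // y ≠ z }) (c : ZMod 2) :
    phi z x r (Finsupp.single y c) = if dist (y : Xb) x < r then c else 0 := by
  rw [phi, Finsupp.liftAddHom_apply_single]
  split <;> simp

lemma phi_boolEmb (z x : Xb) (r : ℝ) (hzx : ¬ dist z x < r) (a : Xb) :
    phi z x r (boolEmb z a) = if dist a x < r then 1 else 0 := by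
  unfold boolEmb
  split
  · next h => subst h; simp [hzx]
  · rw [phi_single]

lemma phi_apply (z x : Xb) (r : ℝ) (u : { y : Xb // y ≠ z } →₀ ZMod 2) :
    phi z x r u = ∑ y ∈ u.support, if dist (y : Xb) x < r then u y else 0 := by
  rw [phi, Finsupp.liftAddHom_apply, Finsupp.sum]
  refine Finset.sum_congr rfl fun y _ => ?_
  split <;> simp

lemma conf_lower (hultra : ∀ x y w : Xb, dist x w ≤ max (dist x y) (dist y w)) (z : Xb)
    (u : { y : Xb // y ≠ z } →₀ ZMod 2) (hu : u ≠ 0) :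
    ∃ r > 0, ∀ L : List (Xb × Xb),
      (L.map fun p => boolEmb z p.1 + boolEmb z p.2).sum = u → r ≤ confLength L := by
  obtain ⟨x, hx⟩ := Finsupp.support_nonempty_iff.2 hu
  set E : Finset Xb := (insert z (u.support.image Subtype.val)).erase (x : Xb) with hE
  have hzE : z ∈ E := Finset.mem_erase.2 ⟨Ne.symm x.2, Finset.mem_insert_self _ _⟩
  have hEne : E.Nonempty := ⟨z, hzE⟩
  set r : ℝ := E.inf' hEne (fun t => dist (x : Xb) t) with hr
  have hrpos : 0 < r := by
    rw [hr, Finset.lt_inf'_iff]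
    intro t ht
    exact dist_pos.2 fun h => (Finset.mem_erase.1 ht).1 h.symm
  refine ⟨r, hrpos, fun L hL => ?_⟩
  by_contra hlen
  push_neg at hlen
  have hzx : ¬ dist z (x : Xb) < r := by
    have h1 : r ≤ dist (x : Xb) z := Finset.inf'_le _ hzE
    rw [dist_comm]; linarith
  have h0 : phi z (x : Xb) r u = 0 := by
    rw [← hL, map_list_sum]
    apply List.sum_eq_zero
    intro c hc
    rw [List.map_map] at hc
    obtain ⟨p, hp, hcp⟩ := List.mem_map.1 hc
    have hd : dist p.1 p.2 < r := lt_of_le_of_lt (dist_le_confLength hp) hlen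
    have hiff : dist p.1 (x : Xb) < r ↔ dist p.2 (x : Xb) < r := by
      constructor <;> intro h
      · exact lt_of_le_of_lt (hultra p.2 p.1 (x : Xb))
          (max_lt (by rw [dist_comm]; exact hd) h)
      · exact lt_of_le_of_lt (hultra p.1 p.2 (x : Xb)) (max_lt hd h)
    rw [← hcp]
    show phi z (x : Xb) r (boolEmb z p.1 + boolEmb z p.2) = 0
    rw [map_add, phi_boolEmb _ _ _ hzx, phi_boolEmb _ _ _ hzx]
    by_cases h1 : dist p.1 (x : Xb) < r
    · rw [if_pos h1, if_pos (hiff.1 h1)]; decide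
    · rw [if_neg h1, if_neg (fun h => h1 (hiff.2 h))]; decide
  have h1 : phi z (x : Xb) r u = 1 := by
    rw [phi_apply, Finset.sum_eq_single x]
    · rw [if_pos (by simpa using hrpos)]
      exact zmod2_eq_one _ (Finsupp.mem_support_iff.1 hx)
    · intro y hy hyx
      have hyE : (y : Xb) ∈ E := Finset.mem_erase.2
        ⟨fun h => hyx (Subtype.ext h), Finset.mem_insert_of_mem
          (Finset.mem_image.2 ⟨y, hy, rfl⟩)⟩
      have : r ≤ dist (x : Xb) (y : Xb) := Finset.inf'_le _ hyE
      rw [if_neg]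
      rw [dist_comm]; linarith
    · intro h; exact absurd hx h
  rw [h1] at h0
  exact one_ne_zero h0

end Aux

/-- Over an ultra-metric space `X̄` with distinguished point `z`, the
Graev-type norm on the free Boolean group `B(X)`, `X = X̄ \ {z}`, is an ultra-norm. -/
theorem graevNorm_is_ultranorm {Xb : Type*} [MetricSpace Xb] [DecidableEq Xb]
    (hultra : ∀ x y w : Xb, dist x w ≤ max (dist x y) (dist y w)) (z : Xb) :
    graevNorm z (0 : { y : Xb // y ≠ z } →₀ ZMod 2) = 0 ∧
    (∀ u : { y : Xb // y ≠ z } →₀ ZMod 2, u ≠ 0 → 0 < graevNorm z u) ∧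
    (∀ u v : { y : Xb // y ≠ z } →₀ ZMod 2,
      graevNorm z (u + v) ≤ max (graevNorm z u) (graevNorm z v)) := by
  refine ⟨?_, ?_, ?_⟩
  · have h0mem : (0 : ℝ) ∈ reps z (0 : { y : Xb // y ≠ z } →₀ ZMod 2) := ⟨[], rfl, rfl⟩
    rw [graevNorm_eq]
    exact le_antisymm (csInf_le (reps_bddBelow z 0) h0mem)
      (le_csInf ⟨0, h0mem⟩ fun b ⟨L, _, hb⟩ => hb ▸ confLength_nonneg L)
  · intro u hu
    obtain ⟨r, hrpos, hlow⟩ := conf_lower hultra z u hu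
    rw [graevNorm_eq]
    refine lt_of_lt_of_le hrpos (le_csInf (reps_nonempty z u) ?_)
    rintro b ⟨L, hL, hb⟩
    exact hb ▸ hlow L hL
  · intro u v
    rw [graevNorm_eq, graevNorm_eq, graevNorm_eq]
    apply le_of_forall_pos_le_add
    intro ε hε
    obtain ⟨a, ⟨L1, hL1, ha⟩, halt⟩ := Real.lt_sInf_add_pos (reps_nonempty z u) hε
    obtain ⟨b, ⟨L2, hL2, hb⟩, hblt⟩ := Real.lt_sInf_add_pos (reps_nonempty z v) hε
    have hmem : confLength (L1 ++ L2) ∈ reps z (u + v) := by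
      refine ⟨L1 ++ L2, ?_, rfl⟩
      rw [List.map_append, List.sum_append, hL1, hL2]
    have h1 : sInf (reps z (u + v)) ≤ confLength (L1 ++ L2) :=
      csInf_le (reps_bddBelow z (u + v)) hmem
    have h2 : confLength (L1 ++ L2) ≤ max a b := ha ▸ hb ▸ confLength_append L1 L2
    have h3 : max a b ≤ max (sInf (reps z u)) (sInf (reps z v)) + ε := by
      apply max_le <;>
        [exact halt.le.trans (by gcongr; exact le_max_left _ _);
         exact hblt.le.trans (by gcongr; exact le_max_right _ _)]
    linarith
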